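/- Let n₁, n₂, n₃ ≥ 3 and let M be an n₂×n₂ Hermitian complex matrix with entries b_{ij}. Suppose: b_{0i} = 0 for 1 ≤ i ≤ n₁-1; b_{ij} = 0 for all i ≠ j with 1 ≤ i,j ≤ n₂-1; ⟨e_0 - e_1, M e_j⟩ = 0 for n₁ ≤ j ≤ n₂-1; ⟨e_0 - e_i, M(∑_{j=0}^{n₂-1} e_j)⟩ = 0 for 1 ≤ i ≤ n₁-1; and ⟨e_{j-1} - e_j, M(∑_{j'=0}^{n₂-1} e_{j'})⟩ = 0 for n₁ ≤ j ≤ n₂-1. Then M is a scalar multiple of the identity matrix. -/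

import Mathlib

open scoped InnerProductSpace BigOperators

/-- The `i`-th standard basis vector of `ℂ^d`. -/
noncomputable def e {d : ℕ} (i : Fin d) : EuclideanSpace ℂ (Fin d) :=
  EuclideanSpace.single i 1

/-- The all-ones vector `∑_{j=0}^{d-1} e_j` of `ℂ^d`. -/
noncomputable def ones (d : ℕ) : EuclideanSpace ℂ (Fin d) :=
  ∑ j : Fin d, e j

lemma e_inner {d : ℕ} (i : Fin d) (v : EuclideanSpace ℂ (Fin d)) : ⟪e i, v⟫_ℂ = v i := by
  simp [e, EuclideanSpace.inner_single_left]

lemma sub_inner {d : ℕ} (a b : Fin d) (v : EuclideanSpace ℂ (Fin d)) :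
    ⟪e a - e b, v⟫_ℂ = v a - v b := by
  rw [inner_sub_left, e_inner, e_inner]

lemma toE_apply {d : ℕ} (M : Matrix (Fin d) (Fin d) ℂ) (v : EuclideanSpace ℂ (Fin d)) (i : Fin d) :
    (Matrix.toEuclideanLin M v) i = ∑ j, M i j * v j := by
  simp [Matrix.toEuclideanLin_apply, Matrix.mulVec, dotProduct]

lemma toE_single {d : ℕ} (M : Matrix (Fin d) (Fin d) ℂ) (j i : Fin d) :
    (Matrix.toEuclideanLin M (e j)) i = M i j := by
  rw [toE_apply]
  simp [e, EuclideanSpace.single_apply]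

lemma ones_apply {d : ℕ} (i : Fin d) : ones d i = 1 := by
  unfold ones e
  rw [WithLp.ofLp_sum, Finset.sum_apply]
  simp [EuclideanSpace.single_apply]

/-- the constraints on Bob's POVM element in Theorem 1 force the Hermitian
`n₂ × n₂` matrix `M` (entries `b_{ij} = M i j`) to be a scalar multiple of the
identity; `n₁, n₂, n₃ ≥ 3` with `n₁ ≤ n₂ ≤ n₃`. -/
theorem stmt_8 (n₁ n₂ n₃ : ℕ) (hn1 : 3 ≤ n₁) (h12 : n₁ ≤ n₂) (h23 : n₂ ≤ n₃)
    (M : Matrix (Fin n₂) (Fin n₂) ℂ) (hM : M.IsHermitian)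
    -- b_{0i} = 0 for 1 ≤ i ≤ n₁ - 1
    (hb1 : ∀ i : ℕ, ∀ _hi1 : 1 ≤ i, ∀ _hi2 : i < n₁,
      M ⟨0, by omega⟩ ⟨i, by omega⟩ = 0)
    -- b_{ij} = 0 for i ≠ j, 1 ≤ i, j ≤ n₂ - 1
    (hb2 : ∀ i j : ℕ, ∀ _hi1 : 1 ≤ i, ∀ _hi2 : i < n₂, ∀ _hj1 : 1 ≤ j,
      ∀ _hj2 : j < n₂, ∀ _hij : i ≠ j, M ⟨i, by omega⟩ ⟨j, by omega⟩ = 0)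
    -- ⟨e_0 - e_1, M e_j⟩ = 0 for n₁ ≤ j ≤ n₂ - 1
    (hb3 : ∀ j : ℕ, ∀ _hj1 : n₁ ≤ j, ∀ _hj2 : j < n₂,
      ⟪e (⟨0, by omega⟩ : Fin n₂) - e ⟨1, by omega⟩,
        Matrix.toEuclideanLin M (e ⟨j, by omega⟩)⟫_ℂ = 0)
    -- ⟨e_0 - e_i, M (∑_{j=0}^{n₂-1} e_j)⟩ = 0 for 1 ≤ i ≤ n₁ - 1
    (hb4 : ∀ i : ℕ, ∀ _hi1 : 1 ≤ i, ∀ _hi2 : i < n₁,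
      ⟪e (⟨0, by omega⟩ : Fin n₂) - e ⟨i, by omega⟩,
        Matrix.toEuclideanLin M (ones n₂)⟫_ℂ = 0)
    -- ⟨e_{j-1} - e_j, M (∑_{j'=0}^{n₂-1} e_{j'})⟩ = 0 for n₁ ≤ j ≤ n₂ - 1
    (hb5 : ∀ j : ℕ, ∀ _hj1 : n₁ ≤ j, ∀ _hj2 : j < n₂,
      ⟪e (⟨j - 1, by omega⟩ : Fin n₂) - e ⟨j, by omega⟩,
        Matrix.toEuclideanLin M (ones n₂)⟫_ℂ = 0) :
    ∃ c : ℂ, M = c • (1 : Matrix (Fin n₂) (Fin n₂) ℂ) := by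
  have hn2 : 3 ≤ n₂ := le_trans hn1 h12
  -- row-0 off-diagonal entries vanish
  have h0j : ∀ j : Fin n₂, j.val ≠ 0 → M ⟨0, by omega⟩ j = 0 := by
    intro j hj
    by_cases hjn : j.val < n₁
    · have := hb1 j.val (by omega) hjn
      simpa using this
    · have h3 := hb3 j.val (by omega) j.isLt
      rw [sub_inner, toE_single, toE_single] at h3
      have h1j : M ⟨1, by omega⟩ ⟨j.val, j.isLt⟩ = 0 :=
        hb2 1 j.val (by omega) (by omega) (by omega) j.isLt (by omega)
      have : M ⟨0, by omega⟩ ⟨j.val, j.isLt⟩ = 0 := by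
        rw [h1j] at h3; linear_combination h3
      simpa using this
  -- all off-diagonal entries vanish
  have hoff : ∀ i j : Fin n₂, i ≠ j → M i j = 0 := by
    intro i j hij
    by_cases hi : i.val = 0
    · have : i = ⟨0, by omega⟩ := Fin.ext hi
      rw [this]
      exact h0j j (by
        intro h
        exact hij (by rw [this]; exact Fin.ext (by omega)))
    · by_cases hj : j.val = 0
      · have hj' : j = ⟨0, by omega⟩ := Fin.ext hj
        have := hM.apply i j
        rw [hj'] at this ⊢
        rw [← this, h0j i hi, star_zero]
      · have := hb2 i.val j.val (by omega) i.isLt (by omega) j.isLt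
          (by intro h; exact hij (Fin.ext h))
        simpa using this
  -- row sums equal diagonal entries
  have hrow : ∀ i : Fin n₂, (Matrix.toEuclideanLin M (ones n₂)) i = M i i := by
    intro i
    rw [toE_apply]
    rw [Finset.sum_eq_single i]
    · rw [ones_apply, mul_one]
    · intro b _ hb
      rw [hoff i b (Ne.symm hb), zero_mul]
    · intro h; exact absurd (Finset.mem_univ i) h
  -- all diagonal entries equal M 0 0
  have hdiag : ∀ k : ℕ, ∀ hk : k < n₂,
      M ⟨k, hk⟩ ⟨k, hk⟩ = M ⟨0, by omega⟩ ⟨0, by omega⟩ := by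
    intro k
    induction k using Nat.strong_induction_on with
    | _ k ih =>
      intro hk
      rcases Nat.eq_zero_or_pos k with h0 | h0
      · subst h0; rfl
      · by_cases hkn : k < n₁
        · have h4 := hb4 k h0 hkn
          rw [sub_inner, hrow, hrow] at h4
          linear_combination -h4
        · have h5 := hb5 k (by omega) hk
          rw [sub_inner, hrow, hrow] at h5
          have hprev := ih (k - 1) (by omega) (by omega)
          rw [← hprev]
          linear_combination -h5
  refine ⟨M ⟨0, by omega⟩ ⟨0, by omega⟩, ?_⟩
  ext i j
  by_cases hij : i = j
  · subst hij
    rw [Matrix.smul_apply, Matrix.one_apply_eq, smul_eq_mul, mul_one]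
    have := hdiag i.val i.isLt
    simpa using this
  · rw [hoff i j hij, Matrix.smul_apply, Matrix.one_apply_ne hij, smul_zero]
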